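/- Let μ be a probability measure on (Ω,𝓖) absolutely continuous with respect to ℙ|_𝓖, and let τ: L^∞ → ℝ be defined by τ(X) = sup_{ν ∈ 𝓡} (𝔼^ν[X] − 𝔼^μ[X]) for some nonempty set 𝓡 of probability measures on (Ω,𝓕) with ν|_𝓖 = μ for all ν ∈ 𝓡, assuming the supremum is finite for all X. Then τ satisfies: (a) 𝓖-invariance, τ(X+Y)=τ(X) for all X ∈ L^∞ and 𝓖-measurable Y ∈ L^∞; (b) μ-monotonicity, 𝔼^μ[X]+τ(X) ≤ 𝔼^μ[Y]+τ(Y) for X ≤ Y; (c) convexity; (d) positive homogeneity; and (e) Fatou continuity. -/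

import Mathlib

open MeasureTheory

/-- the functional τ(X) = sup_{ν∈𝓡}(𝔼^ν[X] − 𝔼^μ[X]), where every ν ∈ 𝓡 is a
probability measure ≪ ℙ with ν|_𝓖 = μ, is a Fatou μ-coherent adjustment: it is 𝓖-invariant,
μ-monotone, convex, positively homogeneous, and Fatou continuous. -/
theorem stmt_9 {Ω : Type*} (m : MeasurableSpace Ω) {mΩ : MeasurableSpace Ω} (hm : m ≤ mΩ)
    (ℙ : Measure Ω) [IsProbabilityMeasure ℙ]
    (Dμ : Ω → ℝ) (hDμmeas : StronglyMeasurable[m] Dμ) (hDμpos : ∀ᵐ ω ∂ℙ, 0 ≤ Dμ ω)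
    (hDμint : Integrable Dμ ℙ) (hDμone : (∫ ω, Dμ ω ∂ℙ) = 1)
    (𝓡 : Set (Ω → ℝ)) (h𝓡ne : 𝓡.Nonempty)
    (h𝓡 : ∀ D ∈ 𝓡, Measurable D ∧ (∀ᵐ ω ∂ℙ, 0 ≤ D ω) ∧ Integrable D ℙ ∧
      (∫ ω, D ω ∂ℙ) = 1 ∧ (ℙ[D|m]) =ᵐ[ℙ] Dμ)
    (τ : (Ω → ℝ) → ℝ)
    (hτ : ∀ X : Ω → ℝ,
      τ X = sSup ((fun D => (∫ ω, D ω * X ω ∂ℙ) - ∫ ω, Dμ ω * X ω ∂ℙ) '' 𝓡))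
    (hfin : ∀ X : Ω → ℝ, Measurable X → (∃ C : ℝ, ∀ ω, |X ω| ≤ C) →
      BddAbove ((fun D => (∫ ω, D ω * X ω ∂ℙ) - ∫ ω, Dμ ω * X ω ∂ℙ) '' 𝓡)) :
    -- (a) 𝓖-invariance
    (∀ X Y : Ω → ℝ, Measurable X → (∃ C : ℝ, ∀ ω, |X ω| ≤ C) →
        StronglyMeasurable[m] Y → (∃ C : ℝ, ∀ ω, |Y ω| ≤ C) → τ (X + Y) = τ X)
    -- (b) μ-monotonicity
    ∧ (∀ X Y : Ω → ℝ, Measurable X → (∃ C : ℝ, ∀ ω, |X ω| ≤ C) → Measurable Y →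
        (∃ C : ℝ, ∀ ω, |Y ω| ≤ C) → (∀ᵐ ω ∂ℙ, X ω ≤ Y ω) →
        (∫ ω, Dμ ω * X ω ∂ℙ) + τ X ≤ (∫ ω, Dμ ω * Y ω ∂ℙ) + τ Y)
    -- (c) convexity
    ∧ (∀ X Y : Ω → ℝ, Measurable X → (∃ C : ℝ, ∀ ω, |X ω| ≤ C) → Measurable Y →
        (∃ C : ℝ, ∀ ω, |Y ω| ≤ C) → ∀ lam : ℝ, 0 ≤ lam → lam ≤ 1 →
        τ (fun ω => lam * X ω + (1 - lam) * Y ω) ≤ lam * τ X + (1 - lam) * τ Y)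
    -- (d) positive homogeneity
    ∧ (∀ X : Ω → ℝ, Measurable X → (∃ C : ℝ, ∀ ω, |X ω| ≤ C) → ∀ lam : ℝ, 0 ≤ lam →
        τ (fun ω => lam * X ω) = lam * τ X)
    -- (e) Fatou continuity
    ∧ (∀ (Xs : ℕ → Ω → ℝ) (X : Ω → ℝ) (C : ℝ), (∀ n, Measurable (Xs n)) →
        (∀ n ω, |Xs n ω| ≤ C) → Measurable X → (∀ ω, |X ω| ≤ C) →
        (∀ᵐ ω ∂ℙ, Filter.Tendsto (fun n => Xs n ω) Filter.atTop (nhds (X ω))) →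
        τ X ≤ Filter.liminf (fun n => τ (Xs n)) Filter.atTop) := by
  classical
  have hDμsm : StronglyMeasurable Dμ := hDμmeas.mono hm
  -- integrability of D * X for integrable D and bounded a.e.-strongly-measurable X
  have hIint : ∀ (D : Ω → ℝ), Integrable D ℙ → ∀ (X : Ω → ℝ),
      AEStronglyMeasurable X ℙ → (∃ C : ℝ, ∀ ω, |X ω| ≤ C) →
      Integrable (fun ω => D ω * X ω) ℙ := by
    intro D hDint X hX hC
    obtain ⟨C, hC⟩ := hC
    have h := hDint.bdd_mul hX (c := C) (Filter.Eventually.of_forall fun ω => by simpa [Real.norm_eq_abs] using hC ω)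
    exact h.congr (Filter.Eventually.of_forall fun ω => mul_comm _ _)
  -- key orthogonality: ∫ D Y = ∫ Dμ Y for m-measurable bounded Y
  have hkey : ∀ D ∈ 𝓡, ∀ (Y : Ω → ℝ), StronglyMeasurable[m] Y →
      (∃ C : ℝ, ∀ ω, |Y ω| ≤ C) →
      (∫ ω, D ω * Y ω ∂ℙ) = ∫ ω, Dμ ω * Y ω ∂ℙ := by
    intro D hD Y hYm hYb
    obtain ⟨hDmeas, hDpos, hDint, hDone, hDce⟩ := h𝓡 D hD
    have hYsm : AEStronglyMeasurable Y ℙ := (hYm.mono hm).aestronglyMeasurable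
    have hYD : Integrable (Y * D) ℙ := by
      have := hIint D hDint Y hYsm hYb
      exact (this.congr (Filter.Eventually.of_forall fun ω => mul_comm _ _))
    have hpull := condExp_mul_of_stronglyMeasurable_left hYm hYD hDint
    calc (∫ ω, D ω * Y ω ∂ℙ) = ∫ ω, (Y * D) ω ∂ℙ := by
            simp_rw [Pi.mul_apply, mul_comm]
      _ = ∫ ω, (ℙ[Y * D|m]) ω ∂ℙ := (integral_condExp hm).symm
      _ = ∫ ω, (Y * ℙ[D|m]) ω ∂ℙ := integral_congr_ae hpull
      _ = ∫ ω, Dμ ω * Y ω ∂ℙ := by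
            refine integral_congr_ae ?_
            filter_upwards [hDce] with ω hω
            simp [Pi.mul_apply, hω, mul_comm]
  -- abbreviation
  set f : (Ω → ℝ) → (Ω → ℝ) → ℝ :=
    fun X D => (∫ ω, D ω * X ω ∂ℙ) - ∫ ω, Dμ ω * X ω ∂ℙ with hf
  have hτ' : ∀ X, τ X = sSup ((f X) '' 𝓡) := hτ
  have hne : ∀ X : Ω → ℝ, ((f X) '' 𝓡).Nonempty := fun X => h𝓡ne.image _
  have hle : ∀ (X : Ω → ℝ), Measurable X → (∃ C : ℝ, ∀ ω, |X ω| ≤ C) →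
      ∀ D ∈ 𝓡, f X D ≤ τ X := by
    intro X hX hXb D hD
    rw [hτ']
    exact le_csSup (hfin X hX hXb) (Set.mem_image_of_mem _ hD)
  have hub : ∀ (X : Ω → ℝ) (b : ℝ), (∀ D ∈ 𝓡, f X D ≤ b) → τ X ≤ b := by
    intro X b hb
    rw [hτ']
    exact csSup_le (hne X) (by rintro r ⟨D, hD, rfl⟩; exact hb D hD)
  -- bound on ∫ D X for density D and bounded X
  have habs : ∀ (D : Ω → ℝ), (∀ᵐ ω ∂ℙ, 0 ≤ D ω) → Integrable D ℙ →
      (∫ ω, D ω ∂ℙ) = 1 → ∀ (X : Ω → ℝ) (C : ℝ), AEStronglyMeasurable X ℙ →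
      (∀ ω, |X ω| ≤ C) → |∫ ω, D ω * X ω ∂ℙ| ≤ C := by
    intro D hDpos hDint hDone X C hX hC
    have hXb : ∃ C : ℝ, ∀ ω, |X ω| ≤ C := ⟨C, hC⟩
    have hint1 : Integrable (fun ω => D ω * X ω) ℙ := hIint D hDint X hX hXb
    have h1 : |∫ ω, D ω * X ω ∂ℙ| ≤ ∫ ω, |D ω * X ω| ∂ℙ := by
      have := norm_integral_le_integral_norm (μ := ℙ) fun ω => D ω * X ω
      simp only [Real.norm_eq_abs] at this
      exact this
    have h2 : (∫ ω, |D ω * X ω| ∂ℙ) ≤ ∫ ω, D ω * C ∂ℙ := by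
      refine integral_mono_ae hint1.abs (hDint.mul_const C) ?_
      filter_upwards [hDpos] with ω hω
      rw [abs_mul, abs_of_nonneg hω]
      exact mul_le_mul_of_nonneg_left (hC ω) hω
    have h3 : (∫ ω, D ω * C ∂ℙ) = C := by
      rw [integral_mul_const, hDone, one_mul]
    linarith
  refine ⟨?_, ?_, ?_, ?_, ?_⟩
  -- (a) 𝓖-invariance
  · intro X Y hX hXb hYm hYb
    rw [hτ' (X + Y), hτ' X]
    congr 1
    refine Set.image_congr fun D hD => ?_
    obtain ⟨hDmeas, hDpos, hDint, hDone, hDce⟩ := h𝓡 D hD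
    have hXsm : AEStronglyMeasurable X ℙ := hX.aestronglyMeasurable
    have hYsm : AEStronglyMeasurable Y ℙ := (hYm.mono hm).aestronglyMeasurable
    have hDX := hIint D hDint X hXsm hXb
    have hDY := hIint D hDint Y hYsm hYb
    have hMX := hIint Dμ hDμint X hXsm hXb
    have hMY := hIint Dμ hDμint Y hYsm hYb
    have e1 : (∫ ω, D ω * (X + Y) ω ∂ℙ)
        = (∫ ω, D ω * X ω ∂ℙ) + ∫ ω, D ω * Y ω ∂ℙ := by
      simp_rw [Pi.add_apply, mul_add]
      exact integral_add hDX hDY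
    have e2 : (∫ ω, Dμ ω * (X + Y) ω ∂ℙ)
        = (∫ ω, Dμ ω * X ω ∂ℙ) + ∫ ω, Dμ ω * Y ω ∂ℙ := by
      simp_rw [Pi.add_apply, mul_add]
      exact integral_add hMX hMY
    have e3 := hkey D hD Y hYm hYb
    simp only [hf, e1, e2, e3]
    ring
  -- (b) μ-monotonicity
  · intro X Y hX hXb hY hYb hXY
    have hXsm : AEStronglyMeasurable X ℙ := hX.aestronglyMeasurable
    have hYsm : AEStronglyMeasurable Y ℙ := hY.aestronglyMeasurable
    have key : ∀ D ∈ 𝓡, (∫ ω, Dμ ω * X ω ∂ℙ) + f X D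
        ≤ (∫ ω, Dμ ω * Y ω ∂ℙ) + τ Y := by
      intro D hD
      obtain ⟨hDmeas, hDpos, hDint, hDone, hDce⟩ := h𝓡 D hD
      have hmono : (∫ ω, D ω * X ω ∂ℙ) ≤ ∫ ω, D ω * Y ω ∂ℙ := by
        refine integral_mono_ae (hIint D hDint X hXsm hXb) (hIint D hDint Y hYsm hYb) ?_
        filter_upwards [hDpos, hXY] with ω h1 h2
        exact mul_le_mul_of_nonneg_left h2 h1
      have h2 : f Y D ≤ τ Y := hle Y hY hYb D hD
      simp only [hf] at h2 ⊢
      linarith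
    have : ∀ D ∈ 𝓡, f X D ≤ (∫ ω, Dμ ω * Y ω ∂ℙ) + τ Y - ∫ ω, Dμ ω * X ω ∂ℙ := by
      intro D hD; linarith [key D hD]
    linarith [hub X _ this]
  -- (c) convexity
  · intro X Y hX hXb hY hYb lam hl0 hl1
    obtain ⟨C₁, hC₁⟩ := hXb
    obtain ⟨C₂, hC₂⟩ := hYb
    have hXsm : AEStronglyMeasurable X ℙ := hX.aestronglyMeasurable
    have hYsm : AEStronglyMeasurable Y ℙ := hY.aestronglyMeasurable
    refine hub _ _ fun D hD => ?_
    obtain ⟨hDmeas, hDpos, hDint, hDone, hDce⟩ := h𝓡 D hD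
    have hDX := hIint D hDint X hXsm ⟨C₁, hC₁⟩
    have hDY := hIint D hDint Y hYsm ⟨C₂, hC₂⟩
    have hMX := hIint Dμ hDμint X hXsm ⟨C₁, hC₁⟩
    have hMY := hIint Dμ hDμint Y hYsm ⟨C₂, hC₂⟩
    have eD : (∫ ω, D ω * (lam * X ω + (1 - lam) * Y ω) ∂ℙ)
        = lam * (∫ ω, D ω * X ω ∂ℙ) + (1 - lam) * ∫ ω, D ω * Y ω ∂ℙ := by
      have : ∀ ω, D ω * (lam * X ω + (1 - lam) * Y ω)
          = lam * (D ω * X ω) + (1 - lam) * (D ω * Y ω) := fun ω => by ring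
      simp_rw [this]
      rw [integral_add (hDX.const_mul lam) (hDY.const_mul (1 - lam)),
        integral_const_mul, integral_const_mul]
    have eM : (∫ ω, Dμ ω * (lam * X ω + (1 - lam) * Y ω) ∂ℙ)
        = lam * (∫ ω, Dμ ω * X ω ∂ℙ) + (1 - lam) * ∫ ω, Dμ ω * Y ω ∂ℙ := by
      have : ∀ ω, Dμ ω * (lam * X ω + (1 - lam) * Y ω)
          = lam * (Dμ ω * X ω) + (1 - lam) * (Dμ ω * Y ω) := fun ω => by ring
      simp_rw [this]
      rw [integral_add (hMX.const_mul lam) (hMY.const_mul (1 - lam)),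
        integral_const_mul, integral_const_mul]
    have h1 : f X D ≤ τ X := hle X hX ⟨C₁, hC₁⟩ D hD
    have h2 : f Y D ≤ τ Y := hle Y hY ⟨C₂, hC₂⟩ D hD
    simp only [hf] at h1 h2 ⊢
    rw [eD, eM]
    nlinarith [mul_le_mul_of_nonneg_left h1 hl0,
      mul_le_mul_of_nonneg_left h2 (by linarith : (0:ℝ) ≤ 1 - lam)]
  -- (d) positive homogeneity
  · intro X hX hXb lam hl0
    obtain ⟨C, hC⟩ := hXb
    have hXsm : AEStronglyMeasurable X ℙ := hX.aestronglyMeasurable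
    have hscale : ∀ D : Ω → ℝ, f (fun ω => lam * X ω) D = lam * f X D := by
      intro D
      simp only [hf]
      have e1 : (∫ ω, D ω * (lam * X ω) ∂ℙ) = lam * ∫ ω, D ω * X ω ∂ℙ := by
        rw [← integral_const_mul]
        exact integral_congr_ae (Filter.Eventually.of_forall fun ω => by ring)
      have e2 : (∫ ω, Dμ ω * (lam * X ω) ∂ℙ) = lam * ∫ ω, Dμ ω * X ω ∂ℙ := by
        rw [← integral_const_mul]
        exact integral_congr_ae (Filter.Eventually.of_forall fun ω => by ring)
      rw [e1, e2]; ring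
    rcases eq_or_lt_of_le hl0 with h0 | hpos
    · -- lam = 0
      subst h0
      have hz : ∀ D : Ω → ℝ, f (fun ω => (0:ℝ) * X ω) D = 0 := by
        intro D; rw [hscale]; ring
      rw [zero_mul]
      refine le_antisymm (hub _ 0 fun D hD => le_of_eq (hz D)) ?_
      obtain ⟨D₀, hD₀⟩ := h𝓡ne
      have h := hle (fun ω => (0:ℝ) * X ω) (by fun_prop) ⟨0, fun ω => by simp⟩ D₀ hD₀
      rw [hz D₀] at h
      exact h
    · -- lam > 0
      have hXlb : ∃ C' : ℝ, ∀ ω, |lam * X ω| ≤ C' :=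
        ⟨|lam| * C, fun ω => by rw [abs_mul]; exact mul_le_mul_of_nonneg_left (hC ω) (abs_nonneg _)⟩
      refine le_antisymm ?_ ?_
      · refine hub _ _ fun D hD => ?_
        rw [hscale]
        exact mul_le_mul_of_nonneg_left (hle X hX ⟨C, hC⟩ D hD) hl0
      · rw [← sub_nonneg]
        have h : τ X ≤ τ (fun ω => lam * X ω) / lam := by
          refine hub X _ fun D hD => ?_
          rw [le_div_iff₀ hpos, mul_comm]
          rw [← hscale D]
          exact hle _ (by fun_prop) hXlb D hD
        calc (0:ℝ) ≤ lam * (τ (fun ω => lam * X ω) / lam - τ X) :=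
              mul_nonneg hl0 (by linarith)
          _ = τ (fun ω => lam * X ω) - lam * τ X := by
              field_simp
  -- (e) Fatou continuity
  · intro Xs X C hXsm hXsb hXm hXb hconv
    have hXsm' : ∀ n, AEStronglyMeasurable (Xs n) ℙ := fun n => (hXsm n).aestronglyMeasurable
    have hXsm'' : AEStronglyMeasurable X ℙ := hXm.aestronglyMeasurable
    -- the sequence τ (Xs n) is bounded above by 2C
    have hτub : ∀ n, τ (Xs n) ≤ C + C := by
      intro n
      refine hub _ _ fun D hD => ?_
      obtain ⟨hDmeas, hDpos, hDint, hDone, hDce⟩ := h𝓡 D hD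
      have h1 := habs D hDpos hDint hDone (Xs n) C (hXsm' n) (hXsb n)
      have h2 := habs Dμ hDμpos hDμint hDμone (Xs n) C (hXsm' n) (hXsb n)
      simp only [hf]
      have := abs_le.1 h1
      have := abs_le.1 h2
      linarith [(abs_le.1 h1).2, (abs_le.1 h2).1]
    refine hub X _ fun D hD => ?_
    obtain ⟨hDmeas, hDpos, hDint, hDone, hDce⟩ := h𝓡 D hD
    -- DCT for a fixed density E
    have hDCT : ∀ (E : Ω → ℝ), AEStronglyMeasurable E ℙ → (∀ᵐ ω ∂ℙ, 0 ≤ E ω) →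
        Integrable E ℙ →
        Filter.Tendsto (fun n => ∫ ω, E ω * Xs n ω ∂ℙ) Filter.atTop
          (nhds (∫ ω, E ω * X ω ∂ℙ)) := by
      intro E hEsm hEpos hEint
      refine tendsto_integral_of_dominated_convergence (fun ω => |E ω| * C)
        (fun n => hEsm.mul (hXsm' n)) (hEint.abs.mul_const C) ?_ ?_
      · intro n
        refine Filter.Eventually.of_forall fun ω => ?_
        rw [Real.norm_eq_abs, abs_mul]
        exact mul_le_mul_of_nonneg_left (hXsb n ω) (abs_nonneg _)
      · filter_upwards [hconv] with ω hω
        exact hω.const_mul (E ω)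
    have htendD := hDCT D hDmeas.aestronglyMeasurable hDpos hDint
    have htendM := hDCT Dμ hDμsm.aestronglyMeasurable hDμpos hDμint
    have htend : Filter.Tendsto (fun n => f (Xs n) D) Filter.atTop (nhds (f X D)) :=
      htendD.sub htendM
    have hliminf : f X D = Filter.liminf (fun n => f (Xs n) D) Filter.atTop :=
      htend.liminf_eq.symm
    rw [hliminf]
    refine Filter.liminf_le_liminf ?_ ?_ ?_
    · exact Filter.Eventually.of_forall fun n => hle (Xs n) (hXsm n) ⟨C, hXsb n⟩ D hD
    · exact htend.isBoundedUnder_ge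
    · exact Filter.isCoboundedUnder_ge_of_le _ hτub
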